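/- In the real/quaternionic case, the set of braidings on 𝒞_ℍ(K₄ⁿ, h^n, τ) is in bijection with pairs (σ, ε) where σ is an h^n-admissible real quadratic form on K₄ⁿ with sgn(Σσ) = -sgn(τ) and ε ∈ {±1}. In particular 𝒞_ℍ(K₄⁰, h⁰, τ) with τ > 0 admits no braiding. -/

import Mathlib

/-- The Klein four-group. -/
abbrev K4 : Type := ZMod 2 × ZMod 2

/-- The standard hyperbolic pairing on `K₄`. -/
noncomputable def hq (a b : K4) : ℝˣ :=
  (-1 : ℝˣ) ^ (a.1 * b.2 + a.2 * b.1 : ZMod 2).val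

/-- The `n`-fold orthogonal sum `h^n` of the standard hyperbolic pairing. -/
noncomputable def hpow (n : ℕ) (a b : Fin n → K4) : ℝˣ := ∏ i, hq (a i) (b i)

/-- The reduced hexagon equations for a braiding on the real/quaternionic
Tambara–Yamagami category `𝒞_ℍ(K₄ⁿ, h^n, τ)`, for data `(σ₀, σ₁, σ₂, σ₃)`;
note the factor `-2` in the equation for `σ₃(1)²`. -/
def ReducedQuat (n : ℕ) (τ : ℝ)
    (s : ((Fin n → K4) → (Fin n → K4) → ℝˣ) × ((Fin n → K4) → ℝˣ) ×
      ((Fin n → K4) → ℝˣ) × ((Fin n → K4) → ℝˣ)) : Prop :=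
  (∀ a b, s.1 a b = hpow n a b) ∧
  (∀ a, s.2.1 a ^ 2 = hpow n a a) ∧
  (∀ a b, s.2.1 (a + b) = s.2.1 a * s.2.1 b * hpow n a b) ∧
  (∀ a, s.2.2.1 a = s.2.1 a) ∧
  ((s.2.2.2 0 : ℝ) ^ 2 = -2 * τ * ∑ c : Fin n → K4, (s.2.1 c : ℝ)) ∧
  (∀ a, s.2.2.2 a = s.2.2.2 0 * s.2.1 a)

lemma neg_one_pow_mod (k : ℕ) : (-1 : ℝˣ) ^ (k % 2) = (-1) ^ k := by
  conv_rhs => rw [← Nat.div_add_mod k 2]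
  rw [pow_add, pow_mul]
  norm_num

lemma hq_zero_left (y : K4) : hq 0 y = 1 := by simp [hq]
lemma hq_zero_right (y : K4) : hq y 0 = 1 := by simp [hq]

lemma hq_self (x : K4) : hq x x = 1 := by
  unfold hq
  have : (x.1 * x.2 + x.2 * x.1 : ZMod 2) = 0 := by
    rw [mul_comm x.2 x.1, ← two_mul]
    have : (2 : ZMod 2) = 0 := rfl
    rw [this, zero_mul]
  rw [this]; simp

lemma hq_add_left (x x' y : K4) : hq (x + x') y = hq x y * hq x' y := by
  unfold hq
  have h : ((x + x').1 * y.2 + (x + x').2 * y.1 : ZMod 2)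
      = (x.1 * y.2 + x.2 * y.1) + (x'.1 * y.2 + x'.2 * y.1) := by
    simp [Prod.fst_add, Prod.snd_add]; ring
  rw [h, ZMod.val_add, neg_one_pow_mod, pow_add]

lemma hpow_self {n : ℕ} (a : Fin n → K4) : hpow n a a = 1 := by
  simp [hpow, hq_self]

lemma hpow_zero_left {n : ℕ} (b : Fin n → K4) : hpow n 0 b = 1 := by
  simp [hpow, hq_zero_left]

lemma hpow_zero_right {n : ℕ} (b : Fin n → K4) : hpow n b 0 = 1 := by
  simp [hpow, hq_zero_right]

lemma hpow_add_left {n : ℕ} (a a' b : Fin n → K4) :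
    hpow n (a + a') b = hpow n a b * hpow n a' b := by
  simp [hpow, hq_add_left, Finset.prod_mul_distrib]

lemma k4_add_self {n : ℕ} (a : Fin n → K4) : a + a = 0 := by
  funext i
  have : ∀ x : ZMod 2, x + x = 0 := by decide
  exact Prod.ext (this _) (this _)

lemma exists_hq_neg (y : K4) (hy : y ≠ 0) : ∃ x : K4, hq x y = -1 := by
  have h : ∃ x : K4, (x.1 * y.2 + x.2 * y.1 : ZMod 2) = 1 := by
    revert hy; revert y; decide
  obtain ⟨x, hx⟩ := h
  refine ⟨x, ?_⟩
  rw [hq, hx]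
  norm_num [ZMod.val_one]

lemma exists_hpow_neg {n : ℕ} (c : Fin n → K4) (hc : c ≠ 0) :
    ∃ a : Fin n → K4, hpow n a c = -1 := by
  obtain ⟨i, hi⟩ : ∃ i, c i ≠ 0 := by
    by_contra h; push_neg at h; exact hc (funext h)
  obtain ⟨x, hx⟩ := exists_hq_neg (c i) hi
  classical
  refine ⟨fun j => if j = i then x else 0, ?_⟩
  rw [hpow, Finset.prod_eq_single i]
  · simp [hx]
  · intro j _ hj; simp [hj, hq_zero_left]
  · simp

lemma char_sum {n : ℕ} (c : Fin n → K4) (hc : c ≠ 0) :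
    ∑ a : Fin n → K4, ((hpow n a c : ℝˣ) : ℝ) = 0 := by
  obtain ⟨a₀, ha₀⟩ := exists_hpow_neg c hc
  have h : ∑ a : Fin n → K4, ((hpow n a c : ℝˣ) : ℝ)
      = ∑ a : Fin n → K4, ((hpow n (a₀ + a) c : ℝˣ) : ℝ) :=
    (Fintype.sum_equiv (Equiv.addLeft a₀) _ _ (fun a => rfl)).symm
  have h2 : ∀ a : Fin n → K4, ((hpow n (a₀ + a) c : ℝˣ) : ℝ)
      = -((hpow n a c : ℝˣ) : ℝ) := by
    intro a; rw [hpow_add_left, ha₀]; push_cast; ring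
  have h3 : ∑ a : Fin n → K4, ((hpow n (a₀ + a) c : ℝˣ) : ℝ)
      = -∑ a : Fin n → K4, ((hpow n a c : ℝˣ) : ℝ) := by
    simp only [h2]
    exact Finset.sum_neg_distrib (G := ℝ) _
  linarith [h, h3]

section Sigma
variable {n : ℕ} {σ : (Fin n → K4) → ℝˣ}
  (hσ : ∀ a b, σ (a + b) = σ a * σ b * hpow n a b)

include hσ

lemma sigma_zero : σ 0 = 1 := by
  have h := hσ 0 0
  rw [add_zero, hpow_zero_left, mul_one] at h
  exact mul_eq_left.mp h.symm

lemma sigma_sq (a : Fin n → K4) : σ a ^ 2 = 1 := by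
  have h := hσ a a
  rw [k4_add_self, hpow_self, mul_one, sigma_zero hσ] at h
  rw [sq]; exact h.symm

lemma sigma_coe_sq (a : Fin n → K4) : ((σ a : ℝˣ) : ℝ) ^ 2 = 1 := by
  have := sigma_sq hσ a
  have : (((σ a ^ 2 : ℝˣ)) : ℝ) = ((1 : ℝˣ) : ℝ) := by rw [this]
  push_cast at this
  exact this

lemma gauss_sq : (∑ c : Fin n → K4, ((σ c : ℝˣ) : ℝ)) ^ 2 = 4 ^ n := by
  classical
  rw [sq, Finset.sum_mul_sum]
  have key : ∀ a : Fin n → K4, ∑ b : Fin n → K4, ((σ a : ℝ) * (σ b : ℝ))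
      = ∑ c : Fin n → K4, ((σ c : ℝ) * ((hpow n a c : ℝˣ) : ℝ)) := by
    intro a
    rw [← Fintype.sum_equiv (Equiv.addLeft a) _ (fun b => (σ a : ℝ) * (σ b : ℝ)) (fun c => rfl)]
    apply Finset.sum_congr rfl
    intro c _
    have h := hσ a c
    have hcoe : ((σ (a + c) : ℝˣ) : ℝ) = (σ a : ℝ) * (σ c : ℝ) * ((hpow n a c : ℝˣ) : ℝ) := by
      rw [h]; push_cast; ring
    calc (σ a : ℝ) * ((σ (a + c) : ℝˣ) : ℝ)
        = (σ a : ℝ) ^ 2 * ((σ c : ℝ) * ((hpow n a c : ℝˣ) : ℝ)) := by rw [hcoe]; ring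
      _ = (σ c : ℝ) * ((hpow n a c : ℝˣ) : ℝ) := by rw [sigma_coe_sq hσ]; ring
  simp only [key]
  rw [Finset.sum_comm]
  have : ∀ c : Fin n → K4, ∑ a : Fin n → K4, ((σ c : ℝ) * ((hpow n a c : ℝˣ) : ℝ))
      = if c = 0 then (σ c : ℝ) * 4 ^ n else 0 := by
    intro c
    by_cases hc : c = 0
    · subst hc
      simp only [hpow_zero_right, if_true]
      rw [← Finset.mul_sum]
      congr 1
      simp only [Units.val_one, Finset.sum_const, Finset.card_univ, nsmul_eq_mul, mul_one]
      rw [Fintype.card_fun]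
      norm_num
    · rw [if_neg hc, ← Finset.mul_sum, char_sum c hc, mul_zero]
  simp only [this]
  rw [Finset.sum_ite_eq' Finset.univ (0 : Fin n → K4)]
  simp [sigma_zero hσ]

lemma gauss_pm : (∑ c : Fin n → K4, ((σ c : ℝˣ) : ℝ)) = 2 ^ n ∨
    (∑ c : Fin n → K4, ((σ c : ℝˣ) : ℝ)) = -(2 ^ n) := by
  have h := gauss_sq hσ
  set S := ∑ c : Fin n → K4, ((σ c : ℝˣ) : ℝ)
  have h4 : ((4 : ℝ) ^ n) = (2 ^ n) ^ 2 := by rw [← pow_mul, pow_mul']; norm_num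
  have : (S - 2 ^ n) * (S + 2 ^ n) = 0 := by nlinarith [h, h4]
  rcases mul_eq_zero.mp this with h' | h'
  · left; linarith
  · right; linarith

end Sigma

lemma key_val (n : ℕ) (τ S : ℝ)
    (hτ : τ = ((2 : ℝ) * 2 ^ n)⁻¹ ∨ τ = -((2 : ℝ) * 2 ^ n)⁻¹)
    (hS : S = 2 ^ n ∨ S = -(2 ^ n)) (hneg : τ * S < 0) :
    -2 * τ * S = 1 := by
  have h2 : (0:ℝ) < 2 ^ n := by positivity
  have hpos : (0:ℝ) < ((2:ℝ) * 2 ^ n)⁻¹ * 2 ^ n := by positivity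
  have hne : (2:ℝ) * 2 ^ n ≠ 0 := by positivity
  rcases hτ with h | h <;> rcases hS with h' | h' <;> subst h <;> subst h'
  · exact absurd hneg (by linarith)
  · field_simp
  · field_simp
  · exact absurd hneg (by nlinarith)

lemma units_pm (x : ℝˣ) (h : ((x : ℝˣ) : ℝ) ^ 2 = 1) : x = 1 ∨ x = -1 := by
  have : ((x : ℝ) - 1) * ((x : ℝ) + 1) = 0 := by nlinarith
  rcases mul_eq_zero.mp this with h' | h'
  · left; ext; push_cast; linarith
  · right; ext; push_cast; linarith

/-- Braidings on the real/quaternionic category `𝒞_ℍ(K₄ⁿ, h^n, τ)` are in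
bijection with pairs `(σ, ε)` where `σ` is an `h^n`-admissible real quadratic
form with `sgn(Σσ) = -sgn(τ)` and `ε = ±1`; in particular for `n = 0`, `τ > 0`
there is no braiding. -/
theorem stmt16 (n : ℕ) (τ : ℝ)
    (hτ : τ = ((2 : ℝ) * 2 ^ n)⁻¹ ∨ τ = -((2 : ℝ) * 2 ^ n)⁻¹) :
    Nonempty
      ({s : ((Fin n → K4) → (Fin n → K4) → ℝˣ) × ((Fin n → K4) → ℝˣ) ×
          ((Fin n → K4) → ℝˣ) × ((Fin n → K4) → ℝˣ) // ReducedQuat n τ s} ≃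
        {p : ((Fin n → K4) → ℝˣ) × ℝˣ //
          (∀ a b, p.1 (a + b) = p.1 a * p.1 b * hpow n a b) ∧
          (τ * ∑ c : Fin n → K4, (p.1 c : ℝ) < 0) ∧
          (p.2 = 1 ∨ p.2 = -1)}) ∧
    (n = 0 ∧ 0 < τ →
      IsEmpty {s : ((Fin n → K4) → (Fin n → K4) → ℝˣ) × ((Fin n → K4) → ℝˣ) ×
          ((Fin n → K4) → ℝˣ) × ((Fin n → K4) → ℝˣ) // ReducedQuat n τ s}) := by
  have sneg : ∀ s, ReducedQuat n τ s →
      τ * ∑ c : Fin n → K4, ((s.2.1 c : ℝˣ) : ℝ) < 0 := by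
    intro s hs
    obtain ⟨h0, h1, h2, h3, h4, h5⟩ := hs
    have hne : ((s.2.2.2 0 : ℝˣ) : ℝ) ≠ 0 := Units.ne_zero _
    have hpos : (0:ℝ) < ((s.2.2.2 0 : ℝˣ) : ℝ) ^ 2 := pow_two_pos_of_ne_zero hne
    rw [h4] at hpos
    nlinarith [hpos]
  constructor
  · refine ⟨{
      toFun := fun s => ⟨(s.1.2.1, s.1.2.2.2 0), s.2.2.2.1, sneg s.1 s.2, ?_⟩
      invFun := fun p => ⟨(hpow n, p.1.1, p.1.1, fun a => p.1.2 * p.1.1 a),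
        fun a b => rfl, ?_, p.2.1, fun a => rfl, ?_, ?_⟩
      left_inv := ?_
      right_inv := ?_ }⟩
    · obtain ⟨h0, h1, h2, h3, h4, h5⟩ := s.2
      exact units_pm _ (by rw [h4]; exact key_val n τ _ hτ (gauss_pm h2) (sneg s.1 s.2))
    · intro a
      rw [hpow_self]
      exact sigma_sq p.2.1 a
    · obtain ⟨hm, hneg, hpm⟩ := p.2
      show ((p.1.2 * p.1.1 0 : ℝˣ) : ℝ) ^ 2
        = -2 * τ * ∑ c : Fin n → K4, ((p.1.1 c : ℝˣ) : ℝ)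
      have h0 : p.1.1 0 = 1 := sigma_zero hm
      have hsq : ((p.1.2 * p.1.1 0 : ℝˣ) : ℝ) ^ 2 = 1 := by
        rw [h0, mul_one]
        rcases hpm with h | h <;> rw [h] <;> norm_num
      exact hsq.trans (key_val n τ _ hτ (gauss_pm hm) hneg).symm
    · intro a
      show p.1.2 * p.1.1 a = (p.1.2 * p.1.1 0) * p.1.1 a
      rw [sigma_zero p.2.1, mul_one]
    · intro s
      obtain ⟨h0, h1, h2, h3, h4, h5⟩ := s.2
      apply Subtype.ext
      refine Prod.ext ?_ (Prod.ext rfl (Prod.ext ?_ ?_))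
      · funext a b
        exact (h0 a b).symm
      · funext a
        exact (h3 a).symm
      · funext a
        exact (h5 a).symm
    · intro p
      apply Subtype.ext
      refine Prod.ext rfl ?_
      show p.1.2 * p.1.1 0 = p.1.2
      rw [sigma_zero p.2.1, mul_one]
  · rintro ⟨rfl, hτpos⟩
    refine ⟨fun x => ?_⟩
    obtain ⟨s, h0, h1, h2, h3, h4, h5⟩ := x
    have hc : ∀ c : Fin 0 → K4, c = 0 := fun c => funext fun i => i.elim0
    have hsum : ∑ c : Fin 0 → K4, ((s.2.1 c : ℝˣ) : ℝ) = 1 := by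
      calc ∑ c : Fin 0 → K4, ((s.2.1 c : ℝˣ) : ℝ)
          = ∑ _c : Fin 0 → K4, ((s.2.1 0 : ℝˣ) : ℝ) :=
            Finset.sum_congr rfl (fun c _ => by rw [hc c])
        _ = 1 := by
            rw [sigma_zero h2]
            simp
    rw [hsum] at h4
    nlinarith [sq_nonneg ((s.2.2.2 0 : ℝˣ) : ℝ), h4, hτpos]
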